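/- Let (V, K, η) be a para-Hermitian vector space with fundamental form ω, and let H be a generalized metric on V (H(X,Y) = η(I X, Y) with I² = id, H an inner product) which additionally satisfies the Born compatibility ω⁻¹(H♭ X, H♭ Y) = -ω(X, Y) for all X, Y. Write H in block form with respect to V = L₊ ⊕ L₋ as in Proposition 2.8 (determined by a pair (g₊, b₊)). Then b₊ = 0; i.e., a Born structure is a generalized metric specified solely by a positive-definite metric g₊ on L₊, and H is block-diagonal: H(X, Y) = g₊(X₊, Y₊) + g₋(X₋, Y₋). -/
import Mathlib


/-- A Born structure is a generalized metric specified solely by a metric `g₊`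
on `L₊`: if `H(X,Y) = η(I X, Y)` is a generalized metric (with `I² = id`, `H` a symmetric
positive-definite form) on a para-Hermitian vector space `(V, K, η)` with fundamental form
`ω(X,Y) = η(K X, Y)` which satisfies the Born compatibility
`ω⁻¹(H♭ X, H♭ Y) = -ω(X, Y)`, expressed equivalently as `ω(I X, I Y) = -ω(X, Y)`,
then the off-diagonal block `b₊` vanishes, i.e. `H(L₊, L₋) = 0`, and `H` is block-diagonal:
`H(X,Y) = g₊(X₊,Y₊) + g₋(X₋,Y₋)` with `X± = (1/2)(X ± K X)`. -/
theorem stmt15 (V : Type*) [AddCommGroup V] [Module ℝ V] [FiniteDimensional ℝ V]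
    (η : V →ₗ[ℝ] V →ₗ[ℝ] ℝ) (hsymm : ∀ X Y : V, η X Y = η Y X)
    (hnondeg : ∀ X : V, (∀ Y : V, η X Y = 0) → X = 0)
    (K : V →ₗ[ℝ] V) (hK : ∀ X : V, K (K X) = X)
    (hcompat : ∀ X Y : V, η (K X) (K Y) = - η X Y)
    (I : V →ₗ[ℝ] V) (hI : ∀ X : V, I (I X) = X)
    (hHsymm : ∀ X Y : V, η (I X) Y = η (I Y) X)
    (hHpos : ∀ X : V, X ≠ 0 → 0 < η (I X) X)
    (hBorn : ∀ X Y : V, η (K (I X)) (I Y) = - η (K X) Y) :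
    (∀ X Y : V, K X = X → K Y = -Y → η (I X) Y = 0) ∧
    (∀ X Y : V, η (I X) Y
      = η (I ((1/2 : ℝ) • (X + K X))) ((1/2 : ℝ) • (Y + K Y))
        + η (I ((1/2 : ℝ) • (X - K X))) ((1/2 : ℝ) • (Y - K Y))) := by
  -- K and I anticommute
  have anti : ∀ X : V, K (I X) = - I (K X) := by
    intro X
    have h0 : ∀ Z : V, η (K (I X) + I (K X)) Z = 0 := by
      intro Z
      have h1 := hBorn X (I Z)
      rw [hI] at h1
      have h2 : η (K X) (I Z) = η (I (K X)) Z := by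
        rw [hsymm, hHsymm]
      simp only [map_add, LinearMap.add_apply]
      rw [h1, h2]; ring
    have h3 := hnondeg _ h0
    exact eq_neg_of_add_eq_zero_left h3
  have cross : ∀ X Y : V, K X = X → K Y = -Y → η (I X) Y = 0 := by
    intro X Y hX hY
    have hKIX : K (I X) = - I X := by rw [anti, hX]
    have h := hcompat (I X) Y
    rw [hKIX, hY] at h
    simp only [map_neg, LinearMap.neg_apply, neg_neg] at h
    linarith
  refine ⟨cross, ?_⟩
  intro X Y
  set Xp := (1/2 : ℝ) • (X + K X) with hXp
  set Xm := (1/2 : ℝ) • (X - K X) with hXm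
  set Yp := (1/2 : ℝ) • (Y + K Y) with hYp
  set Ym := (1/2 : ℝ) • (Y - K Y) with hYm
  have hKXp : K Xp = Xp := by
    rw [hXp, map_smul, map_add, hK, add_comm]
  have hKXm : K Xm = -Xm := by
    rw [hXm, map_smul, map_sub, hK, ← smul_neg, neg_sub]
  have hKYp : K Yp = Yp := by
    rw [hYp, map_smul, map_add, hK, add_comm]
  have hKYm : K Ym = -Ym := by
    rw [hYm, map_smul, map_sub, hK, ← smul_neg, neg_sub]
  have hX : X = Xp + Xm := by rw [hXp, hXm]; module
  have hY : Y = Yp + Ym := by rw [hYp, hYm]; module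
  have c1 : η (I Xp) Ym = 0 := cross Xp Ym hKXp hKYm
  have c2 : η (I Xm) Yp = 0 := by rw [hHsymm]; exact cross Yp Xm hKYp hKXm
  calc η (I X) Y = η (I (Xp + Xm)) (Yp + Ym) := by rw [← hX, ← hY]
    _ = η (I Xp) Yp + η (I Xp) Ym + (η (I Xm) Yp + η (I Xm) Ym) := by
        simp only [map_add, LinearMap.add_apply]; ring
    _ = η (I Xp) Yp + η (I Xm) Ym := by rw [c1, c2]; ring
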